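/- Let X, Y be finite disjoint sets and Q ∈ 𝔓(Y). With 𝔉*_Q(X,Y) = {f ∈ 𝔉_Q(X,Y) : X = ⋃_{y∈Y} f(y)}, the mapping Φ induces a bijection between 𝔉*_Q(X,Y) and 𝔐*_Q(X,Y); that is, for f ∈ 𝔉_Q(X,Y), Φ(f) ∈ 𝔐*_Q(X,Y) if and only if X = ⋃_{y∈Y} f(y). -/
import Mathlib


namespace Erne

variable {α : Type*}

/-- A partial order relation with carrier `X`: a reflexive, antisymmetric,
transitive subset of `X × X`. -/
def IsPor (X : Set α) (R : Set (α × α)) : Prop :=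
  R ⊆ X ×ˢ X ∧ (∀ x ∈ X, (x, x) ∈ R) ∧
    (∀ x y, (x, y) ∈ R → (y, x) ∈ R → x = y) ∧
    (∀ x y z, (x, y) ∈ R → (y, z) ∈ R → (x, z) ∈ R)

/-- The carrier of a p.o.r. (recovered from reflexivity). -/
def carrier (R : Set (α × α)) : Set α := {x | (x, x) ∈ R}

/-- The induced p.o.r. `R|_M = R ∩ (M × M)`. -/
def restrict (R : Set (α × α)) (M : Set α) : Set (α × α) := R ∩ M ×ˢ M

/-- The dual `R^d`. -/
def dual (R : Set (α × α)) : Set (α × α) := {p | (p.2, p.1) ∈ R}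

/-- `↑_R M`. -/
def upSet (R : Set (α × α)) (M : Set α) : Set α := {x | ∃ y ∈ M, (y, x) ∈ R}

/-- `↓_R M`. -/
def downSet (R : Set (α × α)) (M : Set α) : Set α := {x | ∃ y ∈ M, (x, y) ∈ R}

/-- `↑_R x`. -/
def up (R : Set (α × α)) (x : α) : Set α := {z | (x, z) ∈ R}

/-- `↓_R y`. -/
def down (R : Set (α × α)) (y : α) : Set α := {x | (x, y) ∈ R}

/-- `L` is a lower end of `R`. -/
def IsLowerEnd (R : Set (α × α)) (L : Set α) : Prop :=
  ∀ x y, (x, y) ∈ R → y ∈ L → x ∈ L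

/-- `U` is an upper end of `R`. -/
def IsUpperEnd (R : Set (α × α)) (U : Set α) : Prop :=
  ∀ x y, (x, y) ∈ R → x ∈ U → y ∈ U

/-- `M` is convex in `R`. -/
def IsConvex (R : Set (α × α)) (M : Set α) : Prop :=
  ∀ a b x, a ∈ M → b ∈ M → (a, x) ∈ R → (x, b) ∈ R → x ∈ M

/-- The set of maximal points of `R`: those `x` with `↑_R x = {x}`. -/
def maxPts (R : Set (α × α)) : Set α := {x | up R x = {x}}

/-- `max M = max R|_M`. -/
def maxOf (R : Set (α × α)) (M : Set α) : Set α := maxPts (restrict R M)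

/-- `γ_R(M) = ⋃_{(m,n) ∈ M×M} (↑_R m) ∩ (↓_R n)`, the convex hull of `M` in `R`. -/
def gamma (R : Set (α × α)) (M : Set α) : Set α :=
  {x | ∃ m ∈ M, ∃ n ∈ M, (m, x) ∈ R ∧ (x, n) ∈ R}

/-- The antichain (diagonal) `Δ_Y` on `Y`. -/
def diag (Y : Set α) : Set (α × α) := {p | p.1 = p.2 ∧ p.1 ∈ Y}

/-- `𝔘(X,Y)`: p.o.r.'s on `X ∪ Y` in which `Y` is an upper end. -/
def Uset (X Y : Set α) : Set (Set (α × α)) :=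
  {R | IsPor (X ∪ Y) R ∧ IsUpperEnd R Y}

/-- `ℭ_Q(X,Y)`: p.o.r.'s on `X ∪ Y` with `R|_Y = Q` convex in `R`. -/
def Cset (Q : Set (α × α)) (X Y : Set α) : Set (Set (α × α)) :=
  {R | IsPor (X ∪ Y) R ∧ restrict R Y = Q ∧ IsConvex R Y}

/-- `𝔐_Q(X,Y) = 𝔘(X,Y) ∩ ℭ_Q(X,Y)`. -/
def Mset (Q : Set (α × α)) (X Y : Set α) : Set (Set (α × α)) :=
  Uset X Y ∩ Cset Q X Y

/-- `𝔐*_Q(X,Y)`: members of `ℭ_Q(X,Y)` with `max Q = max R`. -/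
def MstarSet (Q : Set (α × α)) (X Y : Set α) : Set (Set (α × α)) :=
  {R ∈ Cset Q X Y | maxPts Q = maxPts R}

/-- `ℑ_Q(X,Y)`: p.o.r.'s on `X ∪ Y` with `R|_Y = Q`. -/
def Iset (Q : Set (α × α)) (X Y : Set α) : Set (Set (α × α)) :=
  {R | IsPor (X ∪ Y) R ∧ restrict R Y = Q}

/-- `𝔑*_Q(X,Y)`: members of `ℑ_Q(X,Y)` with `max Q = max R`. -/
def NstarSet (Q : Set (α × α)) (X Y : Set α) : Set (Set (α × α)) :=
  {R ∈ Iset Q X Y | maxPts Q = maxPts R}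

/-- `τ_{X,Y}(R) = (R|_X)^d ∪ ((X×Y) \ R) ∪ (R|_Y)^d`. -/
def tau (X Y : Set α) (R : Set (α × α)) : Set (α × α) :=
  dual (restrict R X) ∪ ((X ×ˢ Y) \ R) ∪ dual (restrict R Y)

/-- `𝒢_Q(M)`: members `G` of `ℑ_Q(M,Y)` with `γ_G(Y) = c(G)`. -/
def GsetM (Q : Set (α × α)) (Y M : Set α) : Set (Set (α × α)) :=
  {G ∈ Iset Q M Y | gamma G Y = carrier G}

/-- `𝔊_Q(X) = ⋃_{M ⊆ X} 𝒢_Q(M)`. -/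
def Gset (Q : Set (α × α)) (X Y : Set α) : Set (Set (α × α)) :=
  {G | ∃ M ⊆ X, G ∈ GsetM Q Y M}

/-- `ℒ(P)`: the lower ends of `P` (subsets of the carrier of `P`). -/
def lowerEnds (P : Set (α × α)) : Set (Set α) :=
  {L | L ⊆ carrier P ∧ IsLowerEnd P L}

/-- `ℋ_Q(Y, ℒ(P))`: mappings `f : Y → ℒ(P)` with `(a,b) ∈ Q → f a ⊆ f b`. -/
def Hset (Q P : Set (α × α)) (Y : Set α) : Set (↥Y → Set α) :=
  {f | (∀ y, f y ∈ lowerEnds P) ∧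
    ∀ a b : ↥Y, ((a : α), (b : α)) ∈ Q → f a ⊆ f b}

/-- `Φ(f) = P ∪ Q ∪ ⋃_{y ∈ Y} (f(y) × {y})` for `f ∈ ℋ_Q(Y, ℒ(P))`. -/
def Phi (Q : Set (α × α)) (Y : Set α) (P : Set (α × α)) (f : ↥Y → Set α) :
    Set (α × α) :=
  P ∪ Q ∪ {p | ∃ h : p.2 ∈ Y, p.1 ∈ f ⟨p.2, h⟩}

/-- `𝔉_Q(X,Y)`: pairs `(P, f)` with `P ∈ 𝔓(X)` and `f ∈ ℋ_Q(Y, ℒ(P))`;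
the first component encodes `S(f) = P`. -/
def Fset (Q : Set (α × α)) (X Y : Set α) :
    Set (Set (α × α) × (↥Y → Set α)) :=
  {pf | IsPor X pf.1 ∧ pf.2 ∈ Hset Q pf.1 Y}

/-- `𝔉*_Q(X,Y)`: those `f ∈ 𝔉_Q(X,Y)` with `X = ⋃_{y ∈ Y} f(y)`. -/
def FstarSet (Q : Set (α × α)) (X Y : Set α) :
    Set (Set (α × α) × (↥Y → Set α)) :=
  {pf ∈ Fset Q X Y | X = ⋃ y : ↥Y, pf.2 y}

/-- The transitive hull of `S`: the smallest transitive relation containing `S`. -/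
def transHull (S : Set (α × α)) : Set (α × α) :=
  {p | Relation.TransGen (fun a b => (a, b) ∈ S) p.1 p.2}

lemma mem_maxPts' {R : Set (α × α)} {m : α} :
    m ∈ maxPts R ↔ (m, m) ∈ R ∧ ∀ z, (m, z) ∈ R → z = m := by
  constructor
  · intro h
    have h' : up R m = {m} := h
    constructor
    · show m ∈ up R m
      rw [h']; rfl
    · intro z hz
      have hz' : z ∈ up R m := hz
      rw [h'] at hz'
      exact hz'
  · rintro ⟨h1, h2⟩
    show up R m = {m}
    ext z
    exact ⟨fun hz => h2 z hz, fun hz => by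
      rw [Set.mem_singleton_iff] at hz; rw [hz]; exact h1⟩

lemma exists_max_above {X : Set α} (hX : X.Finite) {R : Set (α × α)}
    (hR : IsPor X R) : ∀ x ∈ X, ∃ m, (x, m) ∈ R ∧ m ∈ maxPts R := by
  obtain ⟨hsub, hrefl, hanti, htrans⟩ := hR
  have hupX : ∀ x, up R x ⊆ X := fun x z hz => (hsub hz).2
  have key : ∀ n, ∀ x ∈ X, (up R x).ncard ≤ n →
      ∃ m, (x, m) ∈ R ∧ m ∈ maxPts R := by
    intro n
    induction n with
    | zero =>
      intro x hx h0
      exfalso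
      have hfin : (up R x).Finite := hX.subset (hupX x)
      have hne : (up R x).Nonempty := ⟨x, hrefl x hx⟩
      have := (Set.ncard_pos hfin).mpr hne
      omega
    | succ n ih =>
      intro x hx hle
      by_cases hmax : ∀ z, (x, z) ∈ R → z = x
      · exact ⟨x, hrefl x hx, mem_maxPts'.mpr ⟨hrefl x hx, hmax⟩⟩
      · push_neg at hmax
        obtain ⟨z, hz, hne⟩ := hmax
        have hzX : z ∈ X := (hsub hz).2
        have hss : up R z ⊂ up R x := by
          constructor
          · intro w hw
            exact htrans x z w hz hw
          · intro hcon
            have hxz : x ∈ up R z := hcon (hrefl x hx)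
            exact hne (hanti z x hxz hz)
        have hlt : (up R z).ncard < (up R x).ncard :=
          Set.ncard_lt_ncard hss (hX.subset (hupX x))
        obtain ⟨m, hm1, hm2⟩ := ih z hzX (by omega)
        exact ⟨m, htrans x z m hz hm1, hm2⟩
  intro x hx
  exact key (up R x).ncard x hx le_rfl

lemma mem_Phi {Q : Set (α × α)} {Y : Set α} {P : Set (α × α)} {f : ↥Y → Set α}
    {a b : α} :
    (a, b) ∈ Phi Q Y P f ↔ (a, b) ∈ P ∨ (a, b) ∈ Q ∨ ∃ h : b ∈ Y, a ∈ f ⟨b, h⟩ := by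
  simp only [Phi, Set.mem_union, Set.mem_setOf_eq, or_assoc]

/-- `Φ` induces a bijection between `𝔉*_Q(X,Y)` and `𝔐*_Q(X,Y)`;
for `f ∈ 𝔉_Q(X,Y)`, `Φ(f) ∈ 𝔐*_Q(X,Y)` iff `X = ⋃_{y ∈ Y} f(y)`. -/
theorem stmt7 {α : Type*} (X Y : Set α) (hX : X.Finite) (hY : Y.Finite)
    (hXY : Disjoint X Y) (Q : Set (α × α)) (hQ : IsPor Y Q) :
    Set.BijOn (fun pf : Set (α × α) × (↥Y → Set α) => Phi Q Y pf.1 pf.2)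
      (FstarSet Q X Y) (MstarSet Q X Y) ∧
    ∀ pf ∈ Fset Q X Y,
      (Phi Q Y pf.1 pf.2 ∈ MstarSet Q X Y ↔ X = ⋃ y : ↥Y, pf.2 y) := by
  obtain ⟨hQsub, hQrefl, hQanti, hQtrans⟩ := hQ
  have hD : ∀ {x : α}, x ∈ X → x ∉ Y :=
    fun hx hy => Set.disjoint_left.mp hXY hx hy
  -- Phi always lands in Cset
  have hCset : ∀ P (f : ↥Y → Set α), (P, f) ∈ Fset Q X Y →
      Phi Q Y P f ∈ Cset Q X Y := by
    rintro P f ⟨hP, hflow, hfmono⟩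
    obtain ⟨hPsub, hPrefl, hPanti, hPtrans⟩ := hP
    have hfX : ∀ y : ↥Y, f y ⊆ X := fun y x hx => (hPsub ((hflow y).1 hx)).1
    refine ⟨⟨?_, ?_, ?_, ?_⟩, ?_, ?_⟩
    · rintro ⟨a, b⟩ hab
      rw [mem_Phi] at hab
      rcases hab with h | h | ⟨hb, ha⟩
      · exact ⟨Or.inl (hPsub h).1, Or.inl (hPsub h).2⟩
      · exact ⟨Or.inr (hQsub h).1, Or.inr (hQsub h).2⟩
      · exact ⟨Or.inl (hfX _ ha), Or.inr hb⟩
    · intro x hx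
      rcases hx with hx | hx
      · exact mem_Phi.mpr (Or.inl (hPrefl x hx))
      · exact mem_Phi.mpr (Or.inr (Or.inl (hQrefl x hx)))
    · intro a b hab hba
      rw [mem_Phi] at hab hba
      rcases hab with h | h | ⟨hb, ha⟩
      · rcases hba with h' | h' | ⟨hb', ha'⟩
        · exact hPanti a b h h'
        · exact absurd (hQsub h').2 (hD (hPsub h).1)
        · exact absurd hb' (hD (hPsub h).1)
      · rcases hba with h' | h' | ⟨hb', ha'⟩
        · exact absurd (hQsub h).1 (hD (hPsub h').2)
        · exact hQanti a b h h'
        · exact absurd (hQsub h).2 (hD (hfX _ ha'))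
      · rcases hba with h' | h' | ⟨hb', ha'⟩
        · exact absurd hb (hD (hPsub h').1)
        · exact absurd (hQsub h').2 (hD (hfX _ ha))
        · exact absurd hb' (hD (hfX _ ha))
    · intro a b c hab hbc
      rw [mem_Phi] at hab hbc
      apply mem_Phi.mpr
      rcases hab with h | h | ⟨hb, ha⟩
      · rcases hbc with h' | h' | ⟨hc, hbm⟩
        · exact Or.inl (hPtrans a b c h h')
        · exact absurd (hQsub h').1 (hD (hPsub h).2)
        · exact Or.inr (Or.inr ⟨hc, (hflow ⟨c, hc⟩).2 a b h hbm⟩)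
      · rcases hbc with h' | h' | ⟨hc, hbm⟩
        · exact absurd (hQsub h).2 (hD (hPsub h').1)
        · exact Or.inr (Or.inl (hQtrans a b c h h'))
        · exact absurd (hQsub h).2 (hD (hfX _ hbm))
      · rcases hbc with h' | h' | ⟨hc, hbm⟩
        · exact absurd hb (hD (hPsub h').1)
        · exact Or.inr (Or.inr ⟨(hQsub h').2, hfmono ⟨b, hb⟩ ⟨c, (hQsub h').2⟩ h' ha⟩)
        · exact absurd hb (hD (hfX _ hbm))
    · ext ⟨a, b⟩
      constructor
      · rintro ⟨hab, haY, hbY⟩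
        rw [mem_Phi] at hab
        rcases hab with h | h | ⟨hb, ha⟩
        · exact absurd haY (hD (hPsub h).1)
        · exact h
        · exact absurd haY (hD (hfX _ ha))
      · intro hq
        exact ⟨mem_Phi.mpr (Or.inr (Or.inl hq)), (hQsub hq).1, (hQsub hq).2⟩
    · intro a b x ha hb hax hxb
      rw [mem_Phi] at hax
      rcases hax with h | h | ⟨hx', ha'⟩
      · exact absurd ha (hD (hPsub h).1)
      · exact (hQsub h).2
      · exact absurd ha (hD (hfX _ ha'))
  -- the characterizing iff
  have hiff : ∀ pf ∈ Fset Q X Y,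
      (Phi Q Y pf.1 pf.2 ∈ MstarSet Q X Y ↔ X = ⋃ y : ↥Y, pf.2 y) := by
    rintro ⟨P, f⟩ hpf
    obtain ⟨hP, hflow, hfmono⟩ := hpf
    obtain ⟨hPsub, hPrefl, hPanti, hPtrans⟩ := hP
    have hfX : ∀ y : ↥Y, f y ⊆ X := fun y x hx => (hPsub ((hflow y).1 hx)).1
    constructor
    · rintro ⟨hC, hmax⟩
      apply Set.Subset.antisymm
      · intro x hx
        obtain ⟨m, hxm, hmmax⟩ :=
          exists_max_above hX ⟨hPsub, hPrefl, hPanti, hPtrans⟩ x hx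
        have hmX : m ∈ X := (hPsub hxm).2
        obtain ⟨hmm, hmall⟩ := mem_maxPts'.mp hmmax
        have hex : ∃ y : ↥Y, m ∈ f y := by
          by_contra hcon
          push_neg at hcon
          have hmR : m ∈ maxPts (Phi Q Y P f) := by
            rw [mem_maxPts']
            refine ⟨mem_Phi.mpr (Or.inl hmm), ?_⟩
            intro z hz
            rw [mem_Phi] at hz
            rcases hz with h | h | ⟨hz', hmem⟩
            · exact hmall z h
            · exact absurd (hQsub h).1 (hD hmX)
            · exact absurd hmem (hcon ⟨z, hz'⟩)
          rw [← hmax] at hmR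
          exact hD hmX (hQsub (mem_maxPts'.mp hmR).1).1
        obtain ⟨y, hmy⟩ := hex
        exact Set.mem_iUnion.mpr ⟨y, (hflow y).2 x m hxm hmy⟩
      · intro x hx
        obtain ⟨y, hy⟩ := Set.mem_iUnion.mp hx
        exact hfX y hy
    · intro hU
      refine ⟨hCset P f ⟨⟨hPsub, hPrefl, hPanti, hPtrans⟩, hflow, hfmono⟩, ?_⟩
      ext m
      simp only [mem_maxPts']
      constructor
      · rintro ⟨hmm, hall⟩
        have hmY : m ∈ Y := (hQsub hmm).1
        refine ⟨mem_Phi.mpr (Or.inr (Or.inl hmm)), ?_⟩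
        intro z hz
        rw [mem_Phi] at hz
        rcases hz with h | h | ⟨hz', hmem⟩
        · exact absurd hmY (hD (hPsub h).1)
        · exact hall z h
        · exact absurd hmY (hD (hfX _ hmem))
      · rintro ⟨hmm, hall⟩
        have hmY : m ∈ Y := by
          have hmXY : m ∈ X ∪ Y := by
            rw [mem_Phi] at hmm
            rcases hmm with h | h | ⟨h, hmem⟩
            · exact Or.inl (hPsub h).1
            · exact Or.inr (hQsub h).1
            · exact Or.inl (hfX _ hmem)
          rcases hmXY with hmX | hmY
          · exfalso
            have hmU : m ∈ ⋃ y : ↥Y, f y := hU ▸ hmX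
            obtain ⟨y, hy⟩ := Set.mem_iUnion.mp hmU
            have hmyR : (m, (y : α)) ∈ Phi Q Y P f :=
              mem_Phi.mpr (Or.inr (Or.inr ⟨y.2, hy⟩))
            have hym := hall _ hmyR
            exact hD hmX (hym ▸ y.2)
          · exact hmY
        constructor
        · rw [mem_Phi] at hmm
          rcases hmm with h | h | ⟨h, hmem⟩
          · exact absurd hmY (hD (hPsub h).1)
          · exact h
          · exact absurd hmY (hD (hfX _ hmem))
        · intro z hz
          exact hall z (mem_Phi.mpr (Or.inr (Or.inl hz)))
  -- recovery of P and f from Phi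
  have hPrec : ∀ P (f : ↥Y → Set α), (P, f) ∈ Fset Q X Y →
      ∀ a b : α, ((a, b) ∈ P ↔ (a, b) ∈ Phi Q Y P f ∧ b ∈ X) := by
    rintro P f ⟨hP, hflow, hfmono⟩ a b
    constructor
    · intro h
      exact ⟨mem_Phi.mpr (Or.inl h), (hP.1 h).2⟩
    · rintro ⟨hab, hbX⟩
      rw [mem_Phi] at hab
      rcases hab with h | h | ⟨hb, ha⟩
      · exact h
      · exact absurd (hQsub h).2 (hD hbX)
      · exact absurd hb (hD hbX)
  have hfrec : ∀ P (f : ↥Y → Set α), (P, f) ∈ Fset Q X Y →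
      ∀ (y : ↥Y) (x : α), (x ∈ f y ↔ (x, (y : α)) ∈ Phi Q Y P f ∧ x ∈ X) := by
    rintro P f ⟨hP, hflow, hfmono⟩ y x
    have hfX : ∀ y : ↥Y, f y ⊆ X := fun y x hx => (hP.1 ((hflow y).1 hx)).1
    constructor
    · intro h
      exact ⟨mem_Phi.mpr (Or.inr (Or.inr ⟨y.2, h⟩)), hfX y h⟩
    · rintro ⟨hab, hxX⟩
      rw [mem_Phi] at hab
      rcases hab with h | h | ⟨hb, ha⟩
      · exact absurd y.2 (hD (hP.1 h).2)
      · exact absurd (hQsub h).1 (hD hxX)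
      · exact ha
  refine ⟨⟨?_, ?_, ?_⟩, hiff⟩
  · -- MapsTo
    rintro ⟨P, f⟩ ⟨hF, hU⟩
    exact (hiff (P, f) hF).mpr hU
  · -- InjOn
    rintro ⟨P1, f1⟩ ⟨h1, _⟩ ⟨P2, f2⟩ ⟨h2, _⟩ hEq
    have hEq' : Phi Q Y P1 f1 = Phi Q Y P2 f2 := hEq
    have hPeq : P1 = P2 := by
      ext ⟨a, b⟩
      rw [hPrec P1 f1 h1 a b, hPrec P2 f2 h2 a b, hEq']
    have hfeq : f1 = f2 := by
      funext y
      ext x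
      rw [hfrec P1 f1 h1 y x, hfrec P2 f2 h2 y x, hEq']
    rw [Prod.mk.injEq]
    exact ⟨hPeq, hfeq⟩
  · -- SurjOn
    intro R hR
    obtain ⟨⟨⟨hRsub, hRrefl, hRanti, hRtrans⟩, hres, hconv⟩, hmax⟩ := hR
    have hQR : Q ⊆ R := by rw [← hres]; exact Set.inter_subset_left
    set P : Set (α × α) := restrict R X with hPdef
    set f : ↥Y → Set α := fun y => {x | x ∈ X ∧ (x, (y : α)) ∈ R} with hfdef
    have hPpor : IsPor X P := by
      refine ⟨Set.inter_subset_right, ?_, ?_, ?_⟩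
      · intro x hx
        exact ⟨hRrefl x (Or.inl hx), hx, hx⟩
      · intro a b h h'
        exact hRanti a b h.1 h'.1
      · intro a b c h h'
        exact ⟨hRtrans a b c h.1 h'.1, h.2.1, h'.2.2⟩
    have hFmem : (P, f) ∈ Fset Q X Y := by
      refine ⟨hPpor, ?_, ?_⟩
      · intro y
        constructor
        · intro x hx
          exact ⟨hRrefl x (Or.inl hx.1), hx.1, hx.1⟩
        · intro x x' hxx' hx'
          exact ⟨hxx'.2.1, hRtrans x x' y hxx'.1 hx'.2⟩
      · intro a b hab x hx
        exact ⟨hx.1, hRtrans x a b hx.2 (hQR hab)⟩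
    have hUnion : X = ⋃ y : ↥Y, f y := by
      apply Set.Subset.antisymm
      · intro x hx
        obtain ⟨m, hxm, hmmax⟩ := exists_max_above (hX.union hY)
          ⟨hRsub, hRrefl, hRanti, hRtrans⟩ x (Or.inl hx)
        rw [← hmax] at hmmax
        have hmY : m ∈ Y := (hQsub (mem_maxPts'.mp hmmax).1).1
        exact Set.mem_iUnion.mpr ⟨⟨m, hmY⟩, hx, hxm⟩
      · intro x hx
        obtain ⟨y, hy⟩ := Set.mem_iUnion.mp hx
        exact hy.1
    refine ⟨(P, f), ⟨hFmem, hUnion⟩, ?_⟩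
    show Phi Q Y P f = R
    ext ⟨a, b⟩
    rw [mem_Phi]
    constructor
    · rintro (h | h | ⟨hb, ha⟩)
      · exact h.1
      · exact hQR h
      · exact ha.2
    · intro hab
      have haXY := (hRsub hab).1
      have hbXY := (hRsub hab).2
      rcases hbXY with hbX | hbY
      · rcases haXY with haX | haY
        · exact Or.inl ⟨hab, haX, hbX⟩
        · exfalso
          obtain ⟨m, hbm, hmmax⟩ := exists_max_above (hX.union hY)
            ⟨hRsub, hRrefl, hRanti, hRtrans⟩ b (Or.inl hbX)
          rw [← hmax] at hmmax
          have hmY : m ∈ Y := (hQsub (mem_maxPts'.mp hmmax).1).1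
          exact hD hbX (hconv a m b haY hmY hab hbm)
      · rcases haXY with haX | haY
        · exact Or.inr (Or.inr ⟨hbY, haX, hab⟩)
        · exact Or.inr (Or.inl (by rw [← hres]; exact ⟨hab, haY, hbY⟩))

end Erne
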